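/- For 0 < q < p < 1, the Kullback–Leibler divergence between Bernoulli distributions satisfies KL(Ber(p) ‖ Ber(q)) = ∫_q^p (p − x)/(x(1 − x)) dx ≥ (p − q)²/(2p(1 − q)), and moreover KL(Ber(q) ‖ Ber(p)) ≥ (p − q)²/(2p(1 − q)). -/

import Mathlib

noncomputable def klBer (p q : ℝ) : ℝ :=
  p * Real.log (p / q) + (1 - p) * Real.log ((1 - p) / (1 - q))

lemma klDeriv (c x : ℝ) (hx0 : x ≠ 0) (hx1 : x ≠ 1) :
    HasDerivAt (fun y => c * Real.log y + (1 - c) * Real.log (1 - y))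
      ((c - x) / (x * (1 - x))) x := by
  have h1 : HasDerivAt Real.log x⁻¹ x := Real.hasDerivAt_log hx0
  have h2 : HasDerivAt (fun y => Real.log (1 - y)) (-(1 - x)⁻¹) x := by
    have hne : (1 : ℝ) - x ≠ 0 := sub_ne_zero.mpr (fun h => hx1 h.symm)
    have := (Real.hasDerivAt_log hne).comp x ((hasDerivAt_id x).const_sub 1)
    simpa [Function.comp_def] using this
  have h : HasDerivAt (fun y => c * Real.log y + (1 - c) * Real.log (1 - y))
      (c * x⁻¹ + (1 - c) * -(1 - x)⁻¹) x := (h1.const_mul c).add (h2.const_mul (1 - c))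
  convert h using 1
  have hne : (1 : ℝ) - x ≠ 0 := sub_ne_zero.mpr (fun h => hx1 h.symm)
  field_simp
  ring

lemma klInt (c p q : ℝ) (hq : 0 < q) (hqp : q ≤ p) (hp : p < 1) :
    ∫ x in q..p, (c - x) / (x * (1 - x)) =
      (c * Real.log p + (1 - c) * Real.log (1 - p))
      - (c * Real.log q + (1 - c) * Real.log (1 - q)) := by
  have hmem : ∀ x ∈ Set.uIcc q p, 0 < x ∧ x < 1 := by
    intro x hx
    rw [Set.uIcc_of_le hqp] at hx
    exact ⟨lt_of_lt_of_le hq hx.1, lt_of_le_of_lt hx.2 hp⟩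
  have hcont : ContinuousOn (fun x => (c - x) / (x * (1 - x))) (Set.uIcc q p) := by
    apply ContinuousOn.div
    · fun_prop
    · fun_prop
    · intro x hx
      obtain ⟨h0, h1⟩ := hmem x hx
      have h2 : 0 < 1 - x := by linarith
      positivity
  exact intervalIntegral.integral_eq_sub_of_hasDerivAt
    (fun x hx => klDeriv c x (hmem x hx).1.ne' (ne_of_lt (hmem x hx).2))
    (hcont.intervalIntegrable)

theorem bernoulli_kl_integral_and_bounds (p q : ℝ) (hq : 0 < q) (hqp : q < p) (hp : p < 1) :
    klBer p q = (∫ x in q..p, (p - x) / (x * (1 - x))) ∧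
    (p - q) ^ 2 / (2 * p * (1 - q)) ≤ klBer p q ∧
    (p - q) ^ 2 / (2 * p * (1 - q)) ≤ klBer q p := by
  have hp0 : 0 < p := hq.trans hqp
  have hq1 : q < 1 := hqp.trans hp
  have h1q : (0:ℝ) < 1 - q := by linarith
  have h1p : (0:ℝ) < 1 - p := by linarith
  have heq1 : klBer p q = ∫ x in q..p, (p - x) / (x * (1 - x)) := by
    rw [klInt p p q hq hqp.le hp, klBer,
      Real.log_div hp0.ne' hq.ne', Real.log_div h1p.ne' h1q.ne']
    ring
  have heq2 : klBer q p = ∫ x in q..p, (x - q) / (x * (1 - x)) := by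
    have : ∫ x in q..p, (x - q) / (x * (1 - x))
        = -∫ x in q..p, (q - x) / (x * (1 - x)) := by
      rw [← intervalIntegral.integral_neg]
      congr 1; ext x; ring
    rw [this, klInt q p q hq hqp.le hp, klBer,
      Real.log_div hq.ne' hp0.ne', Real.log_div h1q.ne' h1p.ne']
    ring
  -- common: x(1-x) ≤ p(1-q) on [q,p]
  have hbound : ∀ x ∈ Set.Icc q p, x * (1 - x) ≤ p * (1 - q) := by
    intro x hx
    have := hx.1; have := hx.2
    nlinarith
  have hintlin : ∫ x in q..p, (p - x) / (p * (1 - q)) = (p - q)^2 / (2 * p * (1 - q)) := by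
    rw [intervalIntegral.integral_div]
    have : ∫ x in q..p, (p - x) = (p - q)^2 / 2 := by
      simp [intervalIntegral.integral_sub intervalIntegrable_const intervalIntegral.intervalIntegrable_id]
      ring
    rw [this, div_div]; ring_nf
  have hintlin2 : ∫ x in q..p, (x - q) / (p * (1 - q)) = (p - q)^2 / (2 * p * (1 - q)) := by
    rw [intervalIntegral.integral_div]
    have : ∫ x in q..p, (x - q) = (p - q)^2 / 2 := by
      simp [intervalIntegral.integral_sub intervalIntegral.intervalIntegrable_id intervalIntegrable_const]
      ring
    rw [this, div_div]; ring_nf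
  have hposI : ∀ x ∈ Set.Icc q p, 0 < x * (1 - x) := by
    intro x hx
    have h0 : 0 < x := lt_of_lt_of_le hq hx.1
    have h1 : x < 1 := lt_of_le_of_lt hx.2 hp
    have h2 : 0 < 1 - x := by linarith
    positivity
  have hcontOn : ContinuousOn (fun x => (p - x) / (x * (1 - x))) (Set.uIcc q p) := by
    apply ContinuousOn.div
    · fun_prop
    · fun_prop
    · intro x hx
      rw [Set.uIcc_of_le hqp.le] at hx
      exact (hposI x hx).ne'
  have hcontOn2 : ContinuousOn (fun x => (x - q) / (x * (1 - x))) (Set.uIcc q p) := by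
    apply ContinuousOn.div
    · fun_prop
    · fun_prop
    · intro x hx
      rw [Set.uIcc_of_le hqp.le] at hx
      exact (hposI x hx).ne'
  have hb1 : (p - q) ^ 2 / (2 * p * (1 - q)) ≤ klBer p q := by
    rw [heq1, ← hintlin]
    apply intervalIntegral.integral_mono_on hqp.le
    · apply ContinuousOn.intervalIntegrable; fun_prop
    · exact hcontOn.intervalIntegrable
    · intro x hx
      have hx1 := hx.1; have hx2 := hx.2
      have h0 : 0 < x := lt_of_lt_of_le hq hx1
      gcongr <;> first | exact hposI x hx | linarith
  have hb2 : (p - q) ^ 2 / (2 * p * (1 - q)) ≤ klBer q p := by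
    rw [heq2, ← hintlin2]
    apply intervalIntegral.integral_mono_on hqp.le
    · apply ContinuousOn.intervalIntegrable; fun_prop
    · exact hcontOn2.intervalIntegrable
    · intro x hx
      have hx1 := hx.1; have hx2 := hx.2
      have h0 : 0 < x := lt_of_lt_of_le hq hx1
      gcongr <;> first | exact hposI x hx | linarith
  exact ⟨heq1, hb1, hb2⟩
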